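/- Let T be a symmetric third-order tensor on ℝ^d (a symmetric trilinear form T: ℝ^d × ℝ^d × ℝ^d → ℝ). Define the operator norm ‖T‖ = sup over unit vectors u of |T(u,u,u)|. Then sup over unit vectors a, b, c of |T(a,b,c)| ≤ 5·‖T‖. -/

import Mathlib

open Set

private lemma trilinear_bound_aux {E : Type*} [NormedAddCommGroup E] [NormedSpace ℝ E]
    [FiniteDimensional ℝ E] (T : E →ₗ[ℝ] E →ₗ[ℝ] E →ₗ[ℝ] ℝ) :
    ∃ C : ℝ, ∀ u : E, ‖u‖ = 1 → |T u u u| ≤ C := by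
  let e : (E →ₗ[ℝ] ℝ) ≃ₗ[ℝ] (E →L[ℝ] ℝ) := LinearMap.toContinuousLinearMap
  let U : E →ₗ[ℝ] E →ₗ[ℝ] (E →L[ℝ] ℝ) :=
    { toFun := fun x => e.toLinearMap ∘ₗ T x
      map_add' := fun x y => by ext z; simp
      map_smul' := fun r x => by ext z; simp }
  let V : E →ₗ[ℝ] (E →L[ℝ] (E →L[ℝ] ℝ)) :=
    { toFun := fun x => LinearMap.toContinuousLinearMap (U x)
      map_add' := fun x y => by ext z; simp [U]
      map_smul' := fun r x => by ext z; simp [U] }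
  have hVc0 : Continuous fun u : E => (V u : E →L[ℝ] (E →L[ℝ] ℝ)) :=
    V.continuous_of_finiteDimensional (𝕜 := ℝ) (E := E) (F' := E →L[ℝ] (E →L[ℝ] ℝ))
  have hVc : Continuous fun u : E => ‖V u‖ :=
    (continuous_norm (E := E →L[ℝ] (E →L[ℝ] ℝ))).comp hVc0
  obtain ⟨C, hC⟩ := ((isCompact_sphere (0 : E) 1).image hVc).bddAbove
  refine ⟨C, fun u hu => ?_⟩
  have hus : u ∈ Metric.sphere (0 : E) 1 := by simpa [mem_sphere_zero_iff_norm] using hu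
  have h0 : ‖V u‖ ≤ C := hC ⟨u, hus, rfl⟩
  have hVu : V u u u = T u u u := by simp [V, U, e]
  have h1 : ‖V u u u‖ ≤ ‖V u u‖ * ‖u‖ := (V u u).le_opNorm u
  have h2 : ‖V u u‖ ≤ ‖V u‖ * ‖u‖ := (V u).le_opNorm u
  rw [Real.norm_eq_abs, hVu] at h1
  rw [hu, mul_one] at h1 h2
  linarith


theorem symmetric_tensor_operator_norm_bound (d : ℕ)
    (T : EuclideanSpace ℝ (Fin d) →ₗ[ℝ] EuclideanSpace ℝ (Fin d) →ₗ[ℝ]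
          EuclideanSpace ℝ (Fin d) →ₗ[ℝ] ℝ)
    (hsymm1 : ∀ a b c, T a b c = T b a c)
    (hsymm2 : ∀ a b c, T a b c = T a c b)
    (a b c : EuclideanSpace ℝ (Fin d))
    (ha : ‖a‖ = 1) (hb : ‖b‖ = 1) (hc : ‖c‖ = 1) :
    |T a b c| ≤ 5 * sSup ((fun u : EuclideanSpace ℝ (Fin d) => |T u u u|) '' {u | ‖u‖ = 1}) := by
  have hbdd : BddAbove ((fun u : EuclideanSpace ℝ (Fin d) => |T u u u|) '' {u | ‖u‖ = 1}) := by
    obtain ⟨C, hC⟩ := trilinear_bound_aux T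
    refine ⟨C, ?_⟩
    rintro x ⟨u, hu, rfl⟩
    exact hC u hu
  set M := sSup ((fun u : EuclideanSpace ℝ (Fin d) => |T u u u|) '' {u | ‖u‖ = 1}) with hM
  have hmem : ∀ u : EuclideanSpace ℝ (Fin d), ‖u‖ = 1 → |T u u u| ≤ M :=
    fun u hu => le_csSup hbdd ⟨u, hu, rfl⟩
  have hM0 : 0 ≤ M := le_trans (abs_nonneg _) (hmem a ha)
  have hle : ∀ x : EuclideanSpace ℝ (Fin d), |T x x x| ≤ M * ‖x‖ ^ 3 := by
    intro x
    rcases eq_or_ne x 0 with hx | hx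
    · simp [hx]
    · have hnx : (0 : ℝ) < ‖x‖ := norm_pos_iff.mpr hx
      set u : EuclideanSpace ℝ (Fin d) := ‖x‖⁻¹ • x with hu
      have hu1 : ‖u‖ = 1 := by
        rw [hu, norm_smul, norm_inv, norm_norm, inv_mul_cancel₀ hnx.ne']
      have hxu : x = ‖x‖ • u := by
        rw [hu, smul_smul, mul_inv_cancel₀ hnx.ne', one_smul]
      have hTx : T x x x = ‖x‖ ^ 3 * T u u u := by
        conv_lhs => rw [hxu]
        simp only [map_smul, LinearMap.smul_apply, smul_eq_mul]
        ring
      rw [hTx, abs_mul, abs_of_nonneg (by positivity : (0:ℝ) ≤ ‖x‖ ^ 3)]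
      calc ‖x‖ ^ 3 * |T u u u| ≤ ‖x‖ ^ 3 * M :=
            mul_le_mul_of_nonneg_left (hmem u hu1) (by positivity)
        _ = M * ‖x‖ ^ 3 := mul_comm _ _
  -- polarization identity
  have key : T (a+b+c) (a+b+c) (a+b+c) - T (a+b-c) (a+b-c) (a+b-c)
      - T (a-b+c) (a-b+c) (a-b+c) + T (a-b-c) (a-b-c) (a-b-c) = 24 * T a b c := by
    simp only [map_add, map_sub, LinearMap.add_apply, LinearMap.sub_apply]
    linarith [hsymm1 b a a, hsymm2 a b a, hsymm1 c a a, hsymm2 a c a,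
              hsymm1 a b b, hsymm2 b a b, hsymm1 c b b, hsymm2 b c b,
              hsymm1 a c c, hsymm2 c a c, hsymm1 b c c, hsymm2 c b c,
              hsymm1 a b c, hsymm2 a b c, hsymm2 b a c, hsymm1 b c a,
              hsymm1 a c b]
  have hbnd : ∀ x : EuclideanSpace ℝ (Fin d), ‖x‖ ≤ 3 → |T x x x| ≤ 27 * M := by
    intro x hx
    calc |T x x x| ≤ M * ‖x‖ ^ 3 := hle x
      _ ≤ M * 27 := by
          have h27 : ‖x‖ ^ 3 ≤ 27 := by
            calc ‖x‖ ^ 3 ≤ 3 ^ 3 := pow_le_pow_left₀ (norm_nonneg x) hx 3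
              _ = 27 := by norm_num
          exact mul_le_mul_of_nonneg_left h27 hM0
      _ = 27 * M := mul_comm _ _
  have n1 : ‖a + b + c‖ ≤ 3 := by
    calc ‖a + b + c‖ ≤ ‖a + b‖ + ‖c‖ := norm_add_le _ _
      _ ≤ ‖a‖ + ‖b‖ + ‖c‖ := by linarith [norm_add_le a b]
      _ = 3 := by rw [ha, hb, hc]; norm_num
  have n2 : ‖a + b - c‖ ≤ 3 := by
    calc ‖a + b - c‖ ≤ ‖a + b‖ + ‖c‖ := norm_sub_le _ _
      _ ≤ ‖a‖ + ‖b‖ + ‖c‖ := by linarith [norm_add_le a b]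
      _ = 3 := by rw [ha, hb, hc]; norm_num
  have n3 : ‖a - b + c‖ ≤ 3 := by
    calc ‖a - b + c‖ ≤ ‖a - b‖ + ‖c‖ := norm_add_le _ _
      _ ≤ ‖a‖ + ‖b‖ + ‖c‖ := by linarith [norm_sub_le a b]
      _ = 3 := by rw [ha, hb, hc]; norm_num
  have n4 : ‖a - b - c‖ ≤ 3 := by
    calc ‖a - b - c‖ ≤ ‖a - b‖ + ‖c‖ := norm_sub_le _ _
      _ ≤ ‖a‖ + ‖b‖ + ‖c‖ := by linarith [norm_sub_le a b]
      _ = 3 := by rw [ha, hb, hc]; norm_num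
  have h24 : |24 * T a b c| ≤ 108 * M := by
    rw [← key]
    have b1 := hbnd _ n1
    have b2 := hbnd _ n2
    have b3 := hbnd _ n3
    have b4 := hbnd _ n4
    have := abs_add_le (T (a+b+c) (a+b+c) (a+b+c) - T (a+b-c) (a+b-c) (a+b-c)
      - T (a-b+c) (a-b+c) (a-b+c)) (T (a-b-c) (a-b-c) (a-b-c))
    have h5 := abs_sub (T (a+b+c) (a+b+c) (a+b+c) - T (a+b-c) (a+b-c) (a+b-c))
      (T (a-b+c) (a-b+c) (a-b+c))
    have h6 := abs_sub (T (a+b+c) (a+b+c) (a+b+c)) (T (a+b-c) (a+b-c) (a+b-c))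
    linarith
  rw [abs_mul] at h24
  have : |(24 : ℝ)| = 24 := by norm_num
  rw [this] at h24
  linarith
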